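/- arXiv:0807.2040 — 2 statements merged into one kernel-verified Lean document; each statement's English description precedes it below -/
import Mathlib

section
/- Let λ, λ' : {1, 2, 3, …} → [0,∞) satisfy ∑_{j≥1} λ_j < ∞ and ∑_{j≥1} λ'_j < ∞. Let (Ω, P) be a probability space carrying a family (X_j)_{j≥1} of independent random variables with X_j Poisson-distributed with mean λ_j, and a family (X'_j)_{j≥1} of independent random variables with X'_j Poisson-distributed with mean λ'_j (the two families need not be independent of each other). Then W = ∑_{j≥1} j·X_j and W' = ∑_{j≥1} j·X'_j are almost surely finite, and for every set A ⊆ ℕ, |P(W ∈ A) − P(W' ∈ A)| ≤ ∑_{j≥1} |λ_j − λ'_j|. Equivalently, the total variation distance between the compound Poisson distributions CPo(λ) and CPo(λ') is at most ∑_{j≥1} |λ_j − λ'_j|. -/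
open MeasureTheory ENNReal Filter ProbabilityTheory

section Aux

noncomputable def poi (a : ℝ) (m : ℕ) : ℝ := Real.exp (-a) * a ^ m / m.factorial

lemma poi_nonneg {a : ℝ} (ha : 0 ≤ a) (m : ℕ) : 0 ≤ poi a m := by
  unfold poi; positivity

lemma summable_poi (a : ℝ) : Summable (poi a) := by
  unfold poi
  simpa [mul_div_assoc] using (Real.summable_pow_div_factorial a).mul_left (Real.exp (-a))

lemma hasDerivAt_poi (m : ℕ) (t : ℝ) :
    HasDerivAt (fun t => Real.exp (-t) * t ^ m / m.factorial)
      (Real.exp (-t) * ((m : ℝ) * t ^ (m - 1) - t ^ m) / m.factorial) t := by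
  have h1 : HasDerivAt (fun t : ℝ => Real.exp (-t)) (-Real.exp (-t)) t := by
    simpa using (hasDerivAt_neg t).exp
  have h2 : HasDerivAt (fun t : ℝ => t ^ m) ((m : ℝ) * t ^ (m - 1)) t := hasDerivAt_pow m t
  have : HasDerivAt (fun t => Real.exp (-t) * t ^ m / m.factorial)
      ((-Real.exp (-t) * t ^ m + Real.exp (-t) * ((m : ℝ) * t ^ (m - 1))) / m.factorial) t :=
    (h1.mul h2).div_const (m.factorial : ℝ)
  convert this using 1
  ring

noncomputable def poiH (m : ℕ) (t : ℝ) : ℝ :=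
  Real.exp (-t) * ((m : ℝ) * t ^ (m - 1) + t ^ m) / m.factorial

lemma poiH_cont (m : ℕ) : Continuous (poiH m) := by
  unfold poiH; fun_prop

lemma sum_poiH_le {t : ℝ} (ht : 0 ≤ t) (M : ℕ) :
    ∑ m ∈ Finset.range M, poiH m t ≤ 2 := by
  have key : ∀ K : ℕ, ∑ m ∈ Finset.range K, (m : ℝ) * t ^ (m - 1) / m.factorial ≤ Real.exp t := by
    intro K
    match K with
    | 0 => positivity
    | (K + 1) =>
      rw [Finset.sum_range_succ']
      have : ∀ i : ℕ, ((i : ℝ) + 1) * t ^ i / (i + 1).factorial = t ^ i / i.factorial := by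
        intro i
        rw [Nat.factorial_succ]
        push_cast
        field_simp
      simp only [Nat.cast_add, Nat.cast_one, Nat.add_sub_cancel, this]
      simpa using Real.sum_le_exp_of_nonneg ht K
  have key2 : ∑ m ∈ Finset.range M, t ^ m / m.factorial ≤ Real.exp t :=
    Real.sum_le_exp_of_nonneg ht M
  have expand : ∑ m ∈ Finset.range M, poiH m t
      = Real.exp (-t) * ((∑ m ∈ Finset.range M, (m : ℝ) * t ^ (m - 1) / m.factorial)
        + ∑ m ∈ Finset.range M, t ^ m / m.factorial) := by
    rw [mul_add, Finset.mul_sum, Finset.mul_sum, ← Finset.sum_add_distrib]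
    refine Finset.sum_congr rfl fun m _ => ?_
    unfold poiH
    ring
  rw [expand]
  have hexp : Real.exp (-t) * (Real.exp t + Real.exp t) = 2 := by
    have : Real.exp (-t) * Real.exp t = 1 := by rw [← Real.exp_add]; simp
    nlinarith [this]
  calc Real.exp (-t) * _ ≤ Real.exp (-t) * (Real.exp t + Real.exp t) := by
        apply mul_le_mul_of_nonneg_left (add_le_add (key M) key2) (Real.exp_nonneg _)
    _ = 2 := hexp

lemma poi_sub_le_integral {a b : ℝ} (ha : 0 ≤ a) (hab : a ≤ b) (m : ℕ) :
    |poi a m - poi b m| ≤ ∫ t in a..b, poiH m t := by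
  have hderiv : ∀ t ∈ Set.uIcc a b,
      HasDerivAt (fun t => Real.exp (-t) * t ^ m / m.factorial)
        (Real.exp (-t) * ((m : ℝ) * t ^ (m - 1) - t ^ m) / m.factorial) t :=
    fun t _ => hasDerivAt_poi m t
  have hcont : Continuous fun t : ℝ =>
      Real.exp (-t) * ((m : ℝ) * t ^ (m - 1) - t ^ m) / m.factorial := by fun_prop
  have hint := hcont.intervalIntegrable (μ := MeasureTheory.volume) a b
  have hftc := intervalIntegral.integral_eq_sub_of_hasDerivAt hderiv hint
  have : poi a m - poi b m
      = -∫ t in a..b, Real.exp (-t) * ((m : ℝ) * t ^ (m - 1) - t ^ m) / m.factorial := by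
    rw [hftc]; unfold poi; ring
  rw [this, abs_neg]
  calc |∫ t in a..b, Real.exp (-t) * ((m : ℝ) * t ^ (m - 1) - t ^ m) / m.factorial|
      ≤ ∫ t in a..b, |Real.exp (-t) * ((m : ℝ) * t ^ (m - 1) - t ^ m) / m.factorial| := by
        apply intervalIntegral.abs_integral_le_integral_abs hab
    _ ≤ ∫ t in a..b, poiH m t := by
        apply intervalIntegral.integral_mono_on hab (hint.abs) ((poiH_cont m).intervalIntegrable a b)
        intro t ht
        have ht0 : 0 ≤ t := ha.trans ht.1
        unfold poiH
        rw [abs_div, abs_mul, abs_of_nonneg (Real.exp_nonneg _),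
          abs_of_nonneg (by positivity : (0:ℝ) ≤ (m.factorial : ℝ))]
        gcongr
        calc |(m : ℝ) * t ^ (m - 1) - t ^ m| ≤ |(m : ℝ) * t ^ (m - 1)| + |t ^ m| := abs_sub _ _
          _ = (m : ℝ) * t ^ (m - 1) + t ^ m := by
              rw [abs_of_nonneg (by positivity), abs_of_nonneg (by positivity)]

lemma l1_poi_le_of_le {a b : ℝ} (ha : 0 ≤ a) (hab : a ≤ b) :
    ∑' m, |poi a m - poi b m| ≤ 2 * (b - a) := by
  apply Real.tsum_le_of_sum_range_le (fun m => abs_nonneg _)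
  intro M
  calc ∑ m ∈ Finset.range M, |poi a m - poi b m|
      ≤ ∑ m ∈ Finset.range M, ∫ t in a..b, poiH m t :=
        Finset.sum_le_sum fun m _ => poi_sub_le_integral ha hab m
    _ = ∫ t in a..b, ∑ m ∈ Finset.range M, poiH m t := by
        rw [intervalIntegral.integral_finset_sum]
        intro m _
        exact (poiH_cont m).intervalIntegrable a b
    _ ≤ ∫ t in a..b, (2 : ℝ) := by
        apply intervalIntegral.integral_mono_on hab
        · exact (continuous_finset_sum _ fun m _ => poiH_cont m).intervalIntegrable a b
        · exact intervalIntegrable_const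
        · intro t ht
          exact sum_poiH_le (ha.trans ht.1) M
    _ = 2 * (b - a) := by simp [mul_comm]

lemma l1_poi_le {a b : ℝ} (ha : 0 ≤ a) (hb : 0 ≤ b) :
    ∑' m, |poi a m - poi b m| ≤ 2 * |a - b| := by
  rcases le_total a b with h | h
  · rw [abs_of_nonpos (by linarith), neg_sub]
    exact l1_poi_le_of_le ha h
  · rw [abs_of_nonneg (by linarith)]
    calc ∑' m, |poi a m - poi b m| = ∑' m, |poi b m - poi a m| := by
          congr 1; ext m; rw [abs_sub_comm]
      _ ≤ 2 * (a - b) := l1_poi_le_of_le hb h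

lemma measurableSet_nat' (s : Set ℕ) : MeasurableSet s := Set.Countable.measurableSet s.to_countable

lemma partition_sum {Ω : Type*} [MeasurableSpace Ω] (P : Measure Ω) (U V : Ω → ℕ)
    (hU : Measurable U) (hV : Measurable V) (c : ℕ)
    (hInd : ∀ (C : Set ℕ) (m : ℕ),
      P ({ω | U ω ∈ C} ∩ {ω | V ω = m}) = P {ω | U ω ∈ C} * P {ω | V ω = m})
    (A : Set ℕ) :
    P {ω | U ω + c * V ω ∈ A}
      = ∑' m, P {ω | U ω ∈ {k | k + c * m ∈ A}} * P {ω | V ω = m} := by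
  have hset : {ω | U ω + c * V ω ∈ A}
      = ⋃ m, ({ω | U ω ∈ {k | k + c * m ∈ A}} ∩ {ω | V ω = m}) := by
    ext ω
    simp only [Set.mem_iUnion, Set.mem_inter_iff, Set.mem_setOf_eq]
    constructor
    · intro h; exact ⟨V ω, h, rfl⟩
    · rintro ⟨m, h, rfl⟩; exact h
  rw [hset, measure_iUnion]
  · exact tsum_congr fun m => hInd _ m
  · intro m m' hmm'
    simp only [Set.disjoint_left]
    rintro ω ⟨-, h1⟩ ⟨-, h2⟩
    exact hmm' (h1 ▸ h2 ▸ rfl)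
  · intro m
    exact ((hU (measurableSet_nat' {k | k + c * m ∈ A})).inter
      (hV (measurableSet_nat' {m}) : MeasurableSet {ω | V ω = m}))

lemma pmf_total {Ω : Type*} [MeasurableSpace Ω] (P : Measure Ω) [IsProbabilityMeasure P]
    (V : Ω → ℕ) (hV : Measurable V) : ∑' m, P {ω | V ω = m} = 1 := by
  have huniv : ⋃ m, {ω | V ω = m} = Set.univ := by
    ext ω; simp
  have := measure_iUnion (μ := P) (f := fun m => {ω | V ω = m})
    (fun m m' hmm' => by
      simp only [Set.disjoint_left]
      rintro ω h1 h2
      exact hmm' (h1 ▸ h2 ▸ rfl))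
    (fun m => (hV (measurableSet_nat' {m}) : MeasurableSet {ω | V ω = m}))
  rw [← this, huniv, measure_univ]

lemma abs_toReal_sub_le {Ω : Type*} [MeasurableSpace Ω] (P : Measure Ω) [IsFiniteMeasure P]
    (B C D : Set Ω) (h : ∀ ω, ω ∉ D → (ω ∈ B ↔ ω ∈ C)) :
    |(P B).toReal - (P C).toReal| ≤ (P D).toReal := by
  have hBC : B ⊆ C ∪ D := by
    intro ω hω
    by_cases hD : ω ∈ D
    · exact Or.inr hD
    · exact Or.inl ((h ω hD).mp hω)
  have hCB : C ⊆ B ∪ D := by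
    intro ω hω
    by_cases hD : ω ∈ D
    · exact Or.inr hD
    · exact Or.inl ((h ω hD).mpr hω)
  have h1 : (P B).toReal ≤ (P C).toReal + (P D).toReal := by
    rw [← ENNReal.toReal_add (measure_ne_top _ _) (measure_ne_top _ _)]
    exact ENNReal.toReal_mono (by finiteness) ((measure_mono hBC).trans (measure_union_le _ _))
  have h2 : (P C).toReal ≤ (P B).toReal + (P D).toReal := by
    rw [← ENNReal.toReal_add (measure_ne_top _ _) (measure_ne_top _ _)]
    exact ENNReal.toReal_mono (by finiteness) ((measure_mono hCB).trans (measure_union_le _ _))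
  rw [abs_sub_le_iff]
  constructor <;> linarith

set_option linter.unnecessarySeqFocus false in
lemma real_step {u u' p p' : ℕ → ℝ} {S ε : ℝ}
    (hu0 : ∀ m, 0 ≤ u m) (hu1 : ∀ m, u m ≤ 1)
    (hu'0 : ∀ m, 0 ≤ u' m) (hu'1 : ∀ m, u' m ≤ 1)
    (hp0 : ∀ m, 0 ≤ p m) (hp'0 : ∀ m, 0 ≤ p' m)
    (hsp : Summable p) (hsp' : Summable p')
    (htp : ∑' m, p m = 1) (htp' : ∑' m, p' m = 1)
    (huu' : ∀ m, |u m - u' m| ≤ S)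
    (hl1 : ∑' m, |p m - p' m| ≤ 2 * ε) :
    |∑' m, u m * p m - ∑' m, u' m * p' m| ≤ S + ε := by
  have hS0 : 0 ≤ S := le_trans (abs_nonneg _) (huu' 0)
  have habs_d : Summable (fun m => |p m - p' m|) := (hsp.sub hsp').abs
  have hu_half : ∀ m, |u m - 2⁻¹| ≤ 2⁻¹ := by
    intro m
    rw [abs_le]
    constructor <;> [linarith [hu0 m]; linarith [hu1 m]]
  have hs1 : Summable (fun m => u m * p m) := by
    apply Summable.of_nonneg_of_le (fun m => mul_nonneg (hu0 m) (hp0 m))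
      (fun m => ?_) hsp
    calc u m * p m ≤ 1 * p m := mul_le_mul_of_nonneg_right (hu1 m) (hp0 m)
      _ = p m := one_mul _
  have hs2 : Summable (fun m => u' m * p' m) := by
    apply Summable.of_nonneg_of_le (fun m => mul_nonneg (hu'0 m) (hp'0 m))
      (fun m => ?_) hsp'
    calc u' m * p' m ≤ 1 * p' m := mul_le_mul_of_nonneg_right (hu'1 m) (hp'0 m)
      _ = p' m := one_mul _
  have hT1 : Summable (fun m => (u m - 2⁻¹) * (p m - p' m)) := by
    apply Summable.of_abs
    apply Summable.of_nonneg_of_le (fun m => abs_nonneg _) (fun m => ?_)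
      (habs_d.mul_left 2⁻¹)
    rw [abs_mul]
    exact mul_le_mul_of_nonneg_right (hu_half m) (abs_nonneg _)
  have hT2 : Summable (fun m => (u m - u' m) * p' m) := by
    apply Summable.of_abs
    apply Summable.of_nonneg_of_le (fun m => abs_nonneg _) (fun m => ?_)
      (hsp'.mul_left S)
    rw [abs_mul, abs_of_nonneg (hp'0 m)]
    exact mul_le_mul_of_nonneg_right (huu' m) (hp'0 m)
  have hT3 : Summable (fun m => (2⁻¹ : ℝ) * (p m - p' m)) := (hsp.sub hsp').mul_left 2⁻¹
  have key : ∑' m, u m * p m - ∑' m, u' m * p' m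
      = (∑' m, (u m - 2⁻¹) * (p m - p' m)) + ((∑' m, (u m - u' m) * p' m)
        + ∑' m, (2⁻¹ : ℝ) * (p m - p' m)) := by
    rw [← Summable.tsum_add hT2 hT3, ← Summable.tsum_add hT1 (hT2.add hT3), ← Summable.tsum_sub hs1 hs2]
    exact tsum_congr fun m => by ring
  have hzero : ∑' m, (2⁻¹ : ℝ) * (p m - p' m) = 0 := by
    rw [tsum_mul_left, Summable.tsum_sub hsp hsp', htp, htp']
    ring
  have hb1 : |∑' m, (u m - 2⁻¹) * (p m - p' m)| ≤ ε := by
    calc |∑' m, (u m - 2⁻¹) * (p m - p' m)| ≤ ∑' m, |u m - 2⁻¹| * |p m - p' m| := by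
          simpa [Real.norm_eq_abs] using norm_tsum_le_tsum_norm
            (f := fun m => (u m - 2⁻¹) * (p m - p' m))
            (by simpa [Real.norm_eq_abs, abs_mul] using hT1.abs)
      _ ≤ ∑' m, 2⁻¹ * |p m - p' m| := by
          apply Summable.tsum_le_tsum (fun m => ?_) (by simpa [abs_mul] using hT1.abs)
            (habs_d.mul_left 2⁻¹)
          exact mul_le_mul_of_nonneg_right (hu_half m) (abs_nonneg _)
      _ = 2⁻¹ * ∑' m, |p m - p' m| := tsum_mul_left
      _ ≤ 2⁻¹ * (2 * ε) := by
          apply mul_le_mul_of_nonneg_left hl1 (by norm_num)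
      _ = ε := by ring
  have hb2 : |∑' m, (u m - u' m) * p' m| ≤ S := by
    calc |∑' m, (u m - u' m) * p' m| ≤ ∑' m, |u m - u' m| * |p' m| := by
          simpa [Real.norm_eq_abs] using norm_tsum_le_tsum_norm
            (f := fun m => (u m - u' m) * p' m)
            (by simpa [Real.norm_eq_abs, abs_mul] using hT2.abs)
      _ ≤ ∑' m, S * p' m := by
          apply Summable.tsum_le_tsum (fun m => ?_) (by simpa [abs_mul] using hT2.abs)
            (hsp'.mul_left S)
          rw [abs_of_nonneg (hp'0 m)]
          exact mul_le_mul_of_nonneg_right (huu' m) (hp'0 m)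
      _ = S * ∑' m, p' m := tsum_mul_left
      _ = S := by rw [htp']; ring
  rw [key]
  calc |_ + (_ + _)| ≤ |∑' m, (u m - 2⁻¹) * (p m - p' m)|
        + (|∑' m, (u m - u' m) * p' m| + |∑' m, (2⁻¹ : ℝ) * (p m - p' m)|) := by
        exact (abs_add_le _ _).trans (by gcongr; exact abs_add_le _ _)
    _ ≤ ε + (S + 0) := by
        rw [hzero]
        gcongr <;> simp [hb1, hb2]
    _ = S + ε := by ring

end Aux

/-- The compound Poisson sum `W = ∑_{j≥1} j·X_j`, valued in `[0,∞]`; here the family is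
indexed by `j : ℕ` with `X j` playing the role of `X_{j+1}`. -/
noncomputable def cpSum {Ω : Type*} (X : ℕ → Ω → ℕ) (ω : Ω) : ℝ≥0∞ :=
  ∑' j : ℕ, ((j : ℝ≥0∞) + 1) * (X j ω : ℝ≥0∞)

/-- `X` is a family of independent Poisson random variables on `(Ω, P)`, with `X j`
Poisson-distributed with mean `lam j` (representing `λ_{j+1}`). -/
def IsIndepPoissonFamily {Ω : Type*} [MeasurableSpace Ω] (P : Measure Ω)
    (lam : ℕ → ℝ) (X : ℕ → Ω → ℕ) : Prop :=
  (∀ j, Measurable (X j)) ∧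
  iIndepFun X P ∧
  ∀ j k, P {ω | X j ω = k} =
    ENNReal.ofReal (Real.exp (-(lam j)) * lam j ^ k / (Nat.factorial k))

section Aux2

variable {Ω : Type*} [MeasurableSpace Ω]

lemma step_decomp (P : Measure Ω) [IsProbabilityMeasure P]
    (lam : ℕ → ℝ) (X : ℕ → Ω → ℕ) (hX : IsIndepPoissonFamily P lam X) (n : ℕ) (A : Set ℕ) :
    P {ω | (∑ j ∈ Finset.range (n+1), (j+1) * X j ω) ∈ A}
      = ∑' m, P {ω | (∑ j ∈ Finset.range n, (j+1) * X j ω) ∈ {k | k + (n+1) * m ∈ A}}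
          * P {ω | X n ω = m} := by
  obtain ⟨hmeas, hindep, hpmf⟩ := hX
  set Y : ℕ → Ω → ℕ := fun j ω => (j + 1) * X j ω with hYdef
  have hYmeas : ∀ j, Measurable (Y j) := fun j => (hmeas j).const_mul (j + 1)
  have hYindep : iIndepFun Y P := by
    have := hindep.comp (g := fun j (k : ℕ) => (j + 1) * k)
      (fun j => measurable_of_countable _)
    exact this
  have hIndepWn : IndepFun (∑ j ∈ Finset.range n, Y j) (Y n) P :=
    hYindep.indepFun_sum_range_succ hYmeas n
  have hU : Measurable (fun ω => ∑ j ∈ Finset.range n, (j+1) * X j ω) := by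
    apply Finset.measurable_sum
    intro j _
    exact (hmeas j).const_mul (j + 1)
  have hInd : ∀ (C : Set ℕ) (m : ℕ),
      P ({ω | (∑ j ∈ Finset.range n, (j+1) * X j ω) ∈ C} ∩ {ω | X n ω = m})
        = P {ω | (∑ j ∈ Finset.range n, (j+1) * X j ω) ∈ C} * P {ω | X n ω = m} := by
    intro C m
    have e1 : {ω | (∑ j ∈ Finset.range n, (j+1) * X j ω) ∈ C}
        = (∑ j ∈ Finset.range n, Y j) ⁻¹' C := by
      ext ω; simp [Finset.sum_apply, hYdef]
    have e2 : {ω | X n ω = m} = (Y n) ⁻¹' {(n+1) * m} := by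
      ext ω
      simp only [Set.mem_setOf_eq, Set.mem_preimage, Set.mem_singleton_iff, hYdef]
      constructor
      · rintro rfl; rfl
      · intro h; exact Nat.eq_of_mul_eq_mul_left (Nat.succ_pos n) h
    rw [e1, e2]
    exact hIndepWn.measure_inter_preimage_eq_mul _ _ (measurableSet_nat' _) (measurableSet_nat' _)
  have := partition_sum P (fun ω => ∑ j ∈ Finset.range n, (j+1) * X j ω) (X n)
    hU (hmeas n) (n+1) hInd A
  rw [← this]
  congr 1
  ext ω
  simp only [Set.mem_setOf_eq, Finset.sum_range_succ]

lemma prob_toReal_le_one (P : Measure Ω) [IsProbabilityMeasure P] (s : Set Ω) :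
    (P s).toReal ≤ 1 := by
  have := prob_le_one (μ := P) (s := s)
  calc (P s).toReal ≤ (1 : ℝ≥0∞).toReal := ENNReal.toReal_mono one_ne_top this
    _ = 1 := by simp

lemma poi_pmf_toReal (P : Measure Ω) [IsProbabilityMeasure P]
    (lam : ℕ → ℝ) (hlam0 : ∀ j, 0 ≤ lam j) (X : ℕ → Ω → ℕ)
    (hX : IsIndepPoissonFamily P lam X) (n m : ℕ) :
    (P {ω | X n ω = m}).toReal = poi (lam n) m := by
  rw [hX.2.2 n m]
  exact ENNReal.toReal_ofReal (poi_nonneg (hlam0 n) m)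

lemma poi_tsum_one (P : Measure Ω) [IsProbabilityMeasure P]
    (lam : ℕ → ℝ) (hlam0 : ∀ j, 0 ≤ lam j) (X : ℕ → Ω → ℕ)
    (hX : IsIndepPoissonFamily P lam X) (n : ℕ) :
    ∑' m, poi (lam n) m = 1 := by
  have h1 : ∑' m, poi (lam n) m = ∑' m, (P {ω | X n ω = m}).toReal := by
    exact tsum_congr fun m => (poi_pmf_toReal P lam hlam0 X hX n m).symm
  rw [h1, ← ENNReal.tsum_toReal_eq (fun m => measure_ne_top _ _),
    pmf_total P (X n) (hX.1 n)]
  simp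

lemma tv_range (P : Measure Ω) [IsProbabilityMeasure P]
    (lam lam' : ℕ → ℝ) (hlam0 : ∀ j, 0 ≤ lam j) (hlam'0 : ∀ j, 0 ≤ lam' j)
    (X X' : ℕ → Ω → ℕ)
    (hX : IsIndepPoissonFamily P lam X) (hX' : IsIndepPoissonFamily P lam' X') :
    ∀ (n : ℕ) (A : Set ℕ),
      |(P {ω | (∑ j ∈ Finset.range n, (j+1) * X j ω) ∈ A}).toReal -
        (P {ω | (∑ j ∈ Finset.range n, (j+1) * X' j ω) ∈ A}).toReal|
      ≤ ∑ j ∈ Finset.range n, |lam j - lam' j| := by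
  intro n
  induction n with
  | zero => intro A; simp
  | succ n ih =>
    intro A
    have hd := step_decomp P lam X hX n A
    have hd' := step_decomp P lam' X' hX' n A
    set u : ℕ → ℝ := fun m =>
      (P {ω | (∑ j ∈ Finset.range n, (j+1) * X j ω) ∈ {k | k + (n+1) * m ∈ A}}).toReal with hu
    set u' : ℕ → ℝ := fun m =>
      (P {ω | (∑ j ∈ Finset.range n, (j+1) * X' j ω) ∈ {k | k + (n+1) * m ∈ A}}).toReal with hu'
    have hconv : (P {ω | (∑ j ∈ Finset.range (n+1), (j+1) * X j ω) ∈ A}).toReal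
        = ∑' m, u m * poi (lam n) m := by
      rw [hd, ENNReal.tsum_toReal_eq (fun m => ENNReal.mul_ne_top (measure_ne_top _ _)
        (measure_ne_top _ _))]
      exact tsum_congr fun m => by
        rw [ENNReal.toReal_mul, poi_pmf_toReal P lam hlam0 X hX n m]
    have hconv' : (P {ω | (∑ j ∈ Finset.range (n+1), (j+1) * X' j ω) ∈ A}).toReal
        = ∑' m, u' m * poi (lam' n) m := by
      rw [hd', ENNReal.tsum_toReal_eq (fun m => ENNReal.mul_ne_top (measure_ne_top _ _)
        (measure_ne_top _ _))]
      exact tsum_congr fun m => by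
        rw [ENNReal.toReal_mul, poi_pmf_toReal P lam' hlam'0 X' hX' n m]
    rw [hconv, hconv', Finset.sum_range_succ]
    apply real_step (fun m => ENNReal.toReal_nonneg) (fun m => prob_toReal_le_one P _)
      (fun m => ENNReal.toReal_nonneg) (fun m => prob_toReal_le_one P _)
      (fun m => poi_nonneg (hlam0 n) m) (fun m => poi_nonneg (hlam'0 n) m)
      (summable_poi _) (summable_poi _)
      (poi_tsum_one P lam hlam0 X hX n) (poi_tsum_one P lam' hlam'0 X' hX' n)
      (fun m => ih _)
      (l1_poi_le (hlam0 n) (hlam'0 n))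

lemma tail_event (P : Measure Ω) [IsProbabilityMeasure P]
    (lam : ℕ → ℝ) (hlam0 : ∀ j, 0 ≤ lam j)
    (X : ℕ → Ω → ℕ) (hX : IsIndepPoissonFamily P lam X) (j : ℕ) :
    P {ω | X j ω ≠ 0} ≤ ENNReal.ofReal (lam j) := by
  have h0 : P {ω | X j ω = 0} = ENNReal.ofReal (Real.exp (-(lam j))) := by
    simpa using hX.2.2 j 0
  have hmeas : MeasurableSet {ω | X j ω = 0} :=
    (hX.1 j) (measurableSet_nat' {0}) |>.congr (by ext ω; simp)
  have hcompl : {ω | X j ω ≠ 0} = {ω | X j ω = 0}ᶜ := by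
    ext ω; simp
  rw [hcompl, prob_compl_eq_one_sub hmeas, h0]
  rw [tsub_le_iff_right, ← ENNReal.ofReal_add (hlam0 j) (Real.exp_nonneg _)]
  apply ENNReal.one_le_ofReal.mpr
  have := Real.add_one_le_exp (-(lam j))
  linarith

end Aux2

/-- Lemma 6.2, `LB`, of the paper.
If `(X_j)` and `(X'_j)` are families of independent Poisson variables with summable mean
sequences `λ`, `λ'`, then the compound Poisson sums `W = ∑ j·X_j` and `W' = ∑ j·X'_j` are
a.s. finite and `|P(W ∈ A) − P(W' ∈ A)| ≤ ∑_j |λ_j − λ'_j|` for every `A ⊆ ℕ`;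
i.e. `d_TV(CPo(λ), CPo(λ')) ≤ ‖λ − λ'‖`. -/
theorem stmt13 {Ω : Type*} [MeasurableSpace Ω] (P : Measure Ω) [IsProbabilityMeasure P]
    (lam lam' : ℕ → ℝ) (hlam0 : ∀ j, 0 ≤ lam j) (hlam'0 : ∀ j, 0 ≤ lam' j)
    (hsum : Summable lam) (hsum' : Summable lam')
    (X X' : ℕ → Ω → ℕ)
    (hX : IsIndepPoissonFamily P lam X) (hX' : IsIndepPoissonFamily P lam' X') :
    (∀ᵐ ω ∂P, cpSum X ω < ⊤) ∧ (∀ᵐ ω ∂P, cpSum X' ω < ⊤) ∧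
    ∀ A : Set ℕ,
      |(P {ω | cpSum X ω ∈ (fun k : ℕ => (k : ℝ≥0∞)) '' A}).toReal -
        (P {ω | cpSum X' ω ∈ (fun k : ℕ => (k : ℝ≥0∞)) '' A}).toReal| ≤
      ∑' j, |lam j - lam' j| := by
  -- generic facts, instantiated for both families
  have key_fin : ∀ (lam₀ : ℕ → ℝ) (X₀ : ℕ → Ω → ℕ), (∀ j, 0 ≤ lam₀ j) → Summable lam₀ →
      IsIndepPoissonFamily P lam₀ X₀ → (∀ᵐ ω ∂P, cpSum X₀ ω < ⊤) := by
    intro lam₀ X₀ h0 hs hf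
    have htsum : ∑' j, P {ω | X₀ j ω ≠ 0} ≠ ⊤ := by
      apply ne_top_of_le_ne_top (b := ENNReal.ofReal (∑' j, lam₀ j)) ofReal_ne_top
      calc ∑' j, P {ω | X₀ j ω ≠ 0} ≤ ∑' j, ENNReal.ofReal (lam₀ j) :=
            ENNReal.tsum_le_tsum fun j => tail_event P lam₀ h0 X₀ hf j
        _ = ENNReal.ofReal (∑' j, lam₀ j) := (ENNReal.ofReal_tsum_of_nonneg h0 hs).symm
    filter_upwards [ae_eventually_notMem (μ := P) (s := fun j => {ω | X₀ j ω ≠ 0}) htsum]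
      with ω hω
    rw [eventually_atTop] at hω
    obtain ⟨N, hN⟩ := hω
    have hzero : ∀ j ∉ Finset.range N, ((j : ℝ≥0∞) + 1) * (X₀ j ω : ℝ≥0∞) = 0 := by
      intro j hj
      have : X₀ j ω = 0 := by
        have := hN j (le_of_not_gt (fun h => hj (Finset.mem_range.mpr h)))
        simpa using this
      simp [this]
    rw [cpSum, tsum_eq_sum hzero]
    apply ENNReal.sum_lt_top.mpr
    intro j _
    exact lt_top_iff_ne_top.mpr (ENNReal.mul_ne_top (by simp) (by simp))
  refine ⟨key_fin lam X hlam0 hsum hX, key_fin lam' X' hlam'0 hsum' hX', ?_⟩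
  intro A
  set L := ∑' j, |lam j - lam' j| with hL
  have hsumabs : Summable (fun j => |lam j - lam' j|) := (hsum.sub hsum').abs
  -- truncation bound for a single family
  have key_trunc : ∀ (lam₀ : ℕ → ℝ) (X₀ : ℕ → Ω → ℕ), (∀ j, 0 ≤ lam₀ j) → Summable lam₀ →
      IsIndepPoissonFamily P lam₀ X₀ → ∀ n : ℕ,
      |(P {ω | cpSum X₀ ω ∈ (fun k : ℕ => (k : ℝ≥0∞)) '' A}).toReal -
        (P {ω | (∑ j ∈ Finset.range n, (j+1) * X₀ j ω) ∈ A}).toReal|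
      ≤ ∑' i, lam₀ (i + n) := by
    intro lam₀ X₀ h0 hs hf n
    set D : Set Ω := {ω | ∃ j, n ≤ j ∧ X₀ j ω ≠ 0} with hD
    have hPD : (P D).toReal ≤ ∑' i, lam₀ (i + n) := by
      have hsub : D ⊆ ⋃ i, {ω | X₀ (i + n) ω ≠ 0} := by
        rintro ω ⟨j, hj, hne⟩
        refine Set.mem_iUnion.mpr ⟨j - n, ?_⟩
        simpa [Nat.sub_add_cancel hj] using hne
      have hstail : Summable (fun i => lam₀ (i + n)) := (summable_nat_add_iff n).mpr hs
      have : P D ≤ ENNReal.ofReal (∑' i, lam₀ (i + n)) := by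
        calc P D ≤ P (⋃ i, {ω | X₀ (i + n) ω ≠ 0}) := measure_mono hsub
          _ ≤ ∑' i, P {ω | X₀ (i + n) ω ≠ 0} := measure_iUnion_le _
          _ ≤ ∑' i, ENNReal.ofReal (lam₀ (i + n)) :=
              ENNReal.tsum_le_tsum fun i => tail_event P lam₀ h0 X₀ hf (i + n)
          _ = ENNReal.ofReal (∑' i, lam₀ (i + n)) :=
              (ENNReal.ofReal_tsum_of_nonneg (fun i => h0 _) hstail).symm
      exact ENNReal.toReal_le_of_le_ofReal (tsum_nonneg fun i => h0 _) this
    refine le_trans (abs_toReal_sub_le P _ _ D ?_) hPD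
    intro ω hω
    have hzero : ∀ j ∉ Finset.range n, ((j : ℝ≥0∞) + 1) * (X₀ j ω : ℝ≥0∞) = 0 := by
      intro j hj
      have hj' : n ≤ j := le_of_not_gt (fun h => hj (Finset.mem_range.mpr h))
      have : X₀ j ω = 0 := by
        by_contra hne
        exact hω ⟨j, hj', hne⟩
      simp [this]
    have hW : cpSum X₀ ω = ((∑ j ∈ Finset.range n, (j+1) * X₀ j ω : ℕ) : ℝ≥0∞) := by
      rw [cpSum, tsum_eq_sum hzero]
      push_cast
      rfl
    simp only [Set.mem_setOf_eq, hW]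
    constructor
    · rintro ⟨k, hkA, hk⟩
      have : k = ∑ j ∈ Finset.range n, (j+1) * X₀ j ω := Nat.cast_injective hk
      exact this ▸ hkA
    · intro h
      exact ⟨_, h, rfl⟩
  -- final limit argument
  have main : ∀ n : ℕ,
      |(P {ω | cpSum X ω ∈ (fun k : ℕ => (k : ℝ≥0∞)) '' A}).toReal -
        (P {ω | cpSum X' ω ∈ (fun k : ℕ => (k : ℝ≥0∞)) '' A}).toReal|
      ≤ (∑' i, lam (i + n)) + (∑' i, lam' (i + n)) + L := by
    intro n
    have h1 := key_trunc lam X hlam0 hsum hX n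
    have h2 := key_trunc lam' X' hlam'0 hsum' hX' n
    have h3 := tv_range P lam lam' hlam0 hlam'0 X X' hX hX' n A
    have h4 : ∑ j ∈ Finset.range n, |lam j - lam' j| ≤ L :=
      Summable.sum_le_tsum _ (fun j _ => abs_nonneg _) hsumabs
    set a := (P {ω | cpSum X ω ∈ (fun k : ℕ => (k : ℝ≥0∞)) '' A}).toReal
    set b := (P {ω | (∑ j ∈ Finset.range n, (j+1) * X j ω) ∈ A}).toReal
    set a' := (P {ω | cpSum X' ω ∈ (fun k : ℕ => (k : ℝ≥0∞)) '' A}).toReal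
    set b' := (P {ω | (∑ j ∈ Finset.range n, (j+1) * X' j ω) ∈ A}).toReal
    have : |a - a'| ≤ |a - b| + |b - b'| + |b' - a'| := by
      calc |a - a'| = |(a - b) + (b - b') + (b' - a')| := by ring_nf
        _ ≤ |(a - b) + (b - b')| + |b' - a'| := abs_add_le _ _
        _ ≤ |a - b| + |b - b'| + |b' - a'| := by gcongr; exact abs_add_le _ _
    rw [abs_sub_comm b' a'] at this
    linarith [h1, h2, h3.trans h4, this]
  apply _root_.le_of_forall_pos_le_add
  intro ε hε
  have htail : Tendsto (fun n => (∑' i, lam (i + n)) + (∑' i, lam' (i + n))) atTop (nhds 0) := by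
    have t1 : Tendsto (fun n => ∑' i, lam (i + n)) atTop (nhds 0) := tendsto_sum_nat_add lam
    have t2 : Tendsto (fun n => ∑' i, lam' (i + n)) atTop (nhds 0) := tendsto_sum_nat_add lam'
    simpa using t1.add t2
  have hev : ∀ᶠ n in atTop, (∑' i, lam (i + n)) + (∑' i, lam' (i + n)) < ε :=
    htail.eventually (gt_mem_nhds hε)
  obtain ⟨n, hn⟩ := hev.exists
  calc |(P {ω | cpSum X ω ∈ (fun k : ℕ => (k : ℝ≥0∞)) '' A}).toReal -
        (P {ω | cpSum X' ω ∈ (fun k : ℕ => (k : ℝ≥0∞)) '' A}).toReal|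
      ≤ (∑' i, lam (i + n)) + (∑' i, lam' (i + n)) + L := main n
    _ ≤ ε + L := by linarith
    _ = L + ε := by ring
end

section
/- Let (c_r)_{r≥2} be nonnegative real numbers with c := ∑_{r≥2} c_r < ∞. For each n ≥ 1, let (X_{n,r})_{r≥2} be a family of independent Poisson random variables, where X_{n,r} has mean m_{n,r} = n(n−1)⋯(n−r+1)·c_r / (r·n^{r−1}) (interpreting m_{n,r} = 0 when r > n). Then (1/n) ∑_{r≥2} r·X_{n,r} converges in probability to c as n → ∞. -/
open MeasureTheory ENNReal Filter ProbabilityTheory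
open Topology

/-- The total number of vertices in atoms, `∑_{r≥2} r·X_{n,r}`, valued in `[0,∞]`;
here `X m` plays the role of `X_{n,m+2}`. -/
noncomputable def atomVertexSum {Ω : Type*} (X : ℕ → Ω → ℕ) (ω : Ω) : ℝ≥0∞ :=
  ∑' m : ℕ, ((m : ℝ≥0∞) + 2) * (X m ω : ℝ≥0∞)


lemma tsum_pow_div_fact (l : ℝ) : ∑' k : ℕ, l ^ k / (Nat.factorial k : ℝ) = Real.exp l := by
  rw [Real.exp_eq_exp_ℝ, NormedSpace.exp_eq_tsum_div]

lemma shift1 (l : ℝ) (k : ℕ) :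
    ((k + 1 : ℕ) : ℝ) * (l ^ (k + 1) / (Nat.factorial (k + 1) : ℝ))
      = l * (l ^ k / (Nat.factorial k : ℝ)) := by
  have hk : (Nat.factorial k : ℝ) ≠ 0 := Nat.cast_ne_zero.2 (Nat.factorial_ne_zero k)
  have hk1 : ((k : ℝ) + 1) ≠ 0 := by positivity
  rw [Nat.factorial_succ, pow_succ]
  push_cast
  field_simp

lemma summable_k1 (l : ℝ) : Summable (fun k : ℕ => (k : ℝ) * (l ^ k / (Nat.factorial k : ℝ))) := by
  rw [← summable_nat_add_iff 1]
  have : (fun k : ℕ => ((k + 1 : ℕ) : ℝ) * (l ^ (k + 1) / (Nat.factorial (k + 1) : ℝ)))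
      = fun k : ℕ => l * (l ^ k / (Nat.factorial k : ℝ)) := funext fun k => shift1 l k
  exact this ▸ (Real.summable_pow_div_factorial l).mul_left l

lemma tsum_k1 (l : ℝ) :
    ∑' k : ℕ, (k : ℝ) * (l ^ k / (Nat.factorial k : ℝ)) = l * Real.exp l := by
  rw [Summable.tsum_eq_zero_add (summable_k1 l)]
  simp only [Nat.cast_zero, zero_mul, zero_add]
  calc ∑' k : ℕ, ((k + 1 : ℕ) : ℝ) * (l ^ (k + 1) / (Nat.factorial (k + 1) : ℝ))
      = ∑' k : ℕ, l * (l ^ k / (Nat.factorial k : ℝ)) := tsum_congr fun k => shift1 l k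
    _ = l * Real.exp l := by rw [tsum_mul_left, tsum_pow_div_fact]

lemma summable_k2 (l : ℝ) :
    Summable (fun k : ℕ => (k : ℝ) ^ 2 * (l ^ k / (Nat.factorial k : ℝ))) := by
  rw [← summable_nat_add_iff 1]
  have : (fun k : ℕ => ((k + 1 : ℕ) : ℝ) ^ 2 * (l ^ (k + 1) / (Nat.factorial (k + 1) : ℝ)))
      = fun k : ℕ => l * ((k : ℝ) * (l ^ k / (Nat.factorial k : ℝ)))
        + l * (l ^ k / (Nat.factorial k : ℝ)) := by
    funext k
    have := shift1 l k
    push_cast at this ⊢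
    nlinarith [this]
  rw [this]
  exact ((summable_k1 l).mul_left l).add ((Real.summable_pow_div_factorial l).mul_left l)

lemma tsum_k2 (l : ℝ) :
    ∑' k : ℕ, (k : ℝ) ^ 2 * (l ^ k / (Nat.factorial k : ℝ)) = (l + l ^ 2) * Real.exp l := by
  rw [Summable.tsum_eq_zero_add (summable_k2 l)]
  simp only [Nat.cast_zero, zero_pow, zero_mul, zero_add, ne_eq, OfNat.ofNat_ne_zero,
    not_false_eq_true]
  have hterm : ∀ k : ℕ, ((k + 1 : ℕ) : ℝ) ^ 2 * (l ^ (k + 1) / (Nat.factorial (k + 1) : ℝ))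
      = l * ((k : ℝ) * (l ^ k / (Nat.factorial k : ℝ))) + l * (l ^ k / (Nat.factorial k : ℝ)) := by
    intro k
    have := shift1 l k
    push_cast at this ⊢
    nlinarith [this]
  calc ∑' k : ℕ, ((k + 1 : ℕ) : ℝ) ^ 2 * (l ^ (k + 1) / (Nat.factorial (k + 1) : ℝ))
      = ∑' k : ℕ, (l * ((k : ℝ) * (l ^ k / (Nat.factorial k : ℝ)))
          + l * (l ^ k / (Nat.factorial k : ℝ))) := tsum_congr hterm
    _ = l * (l * Real.exp l) + l * Real.exp l := by
        rw [Summable.tsum_add (((summable_k1 l).mul_left l)) (((Real.summable_pow_div_factorial l).mul_left l)),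
          tsum_mul_left, tsum_mul_left, tsum_k1, tsum_pow_div_fact]
    _ = (l + l ^ 2) * Real.exp l := by ring

lemma exp_neg_mul (l : ℝ) : Real.exp (-l) * Real.exp l = 1 := by
  rw [← Real.exp_add, neg_add_cancel, Real.exp_zero]

section Pois
variable {Ω : Type*} [MeasurableSpace Ω] (P : Measure Ω) [IsProbabilityMeasure P]
variable {f : Ω → ℕ} {l : ℝ}

omit [IsProbabilityMeasure P] in
lemma pois_lintegral (hf : Measurable f) (g : ℕ → ℝ≥0∞) :
    ∫⁻ ω, g (f ω) ∂P = ∑' k, g k * P {ω | f ω = k} := by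
  rw [← lintegral_map (f := g) measurable_from_top hf, lintegral_countable']
  refine tsum_congr fun k => ?_
  rw [Measure.map_apply hf (measurableSet_singleton k)]
  congr 1

variable (hl : 0 ≤ l)
  (hp : ∀ k, P {ω | f ω = k}
    = ENNReal.ofReal (Real.exp (-l) * l ^ k / (Nat.factorial k : ℝ)))

include hl hp



lemma pois_mean_lint (hf : Measurable f) :
    ∫⁻ ω, ((f ω : ℕ) : ℝ≥0∞) ∂P = ENNReal.ofReal l := by
  rw [pois_lintegral P hf (fun k => (k : ℝ≥0∞))]
  have h1 : ∀ k : ℕ, ((k : ℕ) : ℝ≥0∞) * P {ω | f ω = k}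
      = ENNReal.ofReal ((k : ℝ) * (Real.exp (-l) * l ^ k / (Nat.factorial k : ℝ))) := by
    intro k
    rw [hp k, ← ENNReal.ofReal_natCast k, ← ENNReal.ofReal_mul (Nat.cast_nonneg k)]
  rw [tsum_congr h1]
  have hsum : Summable (fun k : ℕ => (k : ℝ) * (Real.exp (-l) * l ^ k / (Nat.factorial k : ℝ))) := by
    have : (fun k : ℕ => (k : ℝ) * (Real.exp (-l) * l ^ k / (Nat.factorial k : ℝ)))
        = fun k : ℕ => Real.exp (-l) * ((k : ℝ) * (l ^ k / (Nat.factorial k : ℝ))) := by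
      funext k; ring
    rw [this]; exact (summable_k1 l).mul_left _
  rw [← ENNReal.ofReal_tsum_of_nonneg (fun k => by positivity) hsum]
  congr 1
  calc ∑' k : ℕ, (k : ℝ) * (Real.exp (-l) * l ^ k / (Nat.factorial k : ℝ))
      = ∑' k : ℕ, Real.exp (-l) * ((k : ℝ) * (l ^ k / (Nat.factorial k : ℝ))) :=
        tsum_congr fun k => by ring
    _ = Real.exp (-l) * (l * Real.exp l) := by rw [tsum_mul_left, tsum_k1]
    _ = l := by rw [← mul_assoc, mul_comm (Real.exp (-l)) l, mul_assoc, exp_neg_mul, mul_one]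

lemma pois_sq_lint (hf : Measurable f) :
    ∫⁻ ω, ((f ω : ℕ) : ℝ≥0∞) ^ 2 ∂P = ENNReal.ofReal (l + l ^ 2) := by
  rw [pois_lintegral P hf (fun k => ((k : ℕ) : ℝ≥0∞) ^ 2)]
  have h1 : ∀ k : ℕ, ((k : ℕ) : ℝ≥0∞) ^ 2 * P {ω | f ω = k}
      = ENNReal.ofReal ((k : ℝ) ^ 2 * (Real.exp (-l) * l ^ k / (Nat.factorial k : ℝ))) := by
    intro k
    rw [hp k, ← ENNReal.ofReal_natCast k, ← ENNReal.ofReal_pow (Nat.cast_nonneg k),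
      ← ENNReal.ofReal_mul (by positivity)]
  rw [tsum_congr h1]
  have hsum : Summable
      (fun k : ℕ => (k : ℝ) ^ 2 * (Real.exp (-l) * l ^ k / (Nat.factorial k : ℝ))) := by
    have : (fun k : ℕ => (k : ℝ) ^ 2 * (Real.exp (-l) * l ^ k / (Nat.factorial k : ℝ)))
        = fun k : ℕ => Real.exp (-l) * ((k : ℝ) ^ 2 * (l ^ k / (Nat.factorial k : ℝ))) := by
      funext k; ring
    rw [this]; exact (summable_k2 l).mul_left _
  rw [← ENNReal.ofReal_tsum_of_nonneg (fun k => by positivity) hsum]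
  congr 1
  calc ∑' k : ℕ, (k : ℝ) ^ 2 * (Real.exp (-l) * l ^ k / (Nat.factorial k : ℝ))
      = ∑' k : ℕ, Real.exp (-l) * ((k : ℝ) ^ 2 * (l ^ k / (Nat.factorial k : ℝ))) :=
        tsum_congr fun k => by ring
    _ = Real.exp (-l) * ((l + l ^ 2) * Real.exp l) := by rw [tsum_mul_left, tsum_k2]
    _ = l + l ^ 2 := by
        rw [← mul_assoc, mul_comm (Real.exp (-l)) (l + l ^ 2), mul_assoc, exp_neg_mul, mul_one]

lemma pois_integrable (hf : Measurable f) :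
    Integrable (fun ω => (f ω : ℝ)) P := by
  have hmr : Measurable (fun ω => ((f ω : ℕ) : ℝ)) := measurable_from_top.comp hf
  refine ⟨hmr.aestronglyMeasurable, ?_⟩
  rw [hasFiniteIntegral_iff_ofReal (ae_of_all _ fun ω => Nat.cast_nonneg _)]
  simp only [ENNReal.ofReal_natCast]
  rw [pois_mean_lint P hl hp hf]
  exact ENNReal.ofReal_lt_top

lemma pois_integral (hf : Measurable f) :
    ∫ ω, (f ω : ℝ) ∂P = l := by
  have hmr : Measurable (fun ω => ((f ω : ℕ) : ℝ)) := measurable_from_top.comp hf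
  have hmr : Measurable (fun ω => ((f ω : ℕ) : ℝ)) := measurable_from_top.comp hf
  have hmr : Measurable (fun ω => ((f ω : ℕ) : ℝ)) := measurable_from_top.comp hf
  have hmr : Measurable (fun ω => ((f ω : ℕ) : ℝ)) := measurable_from_top.comp hf
  rw [integral_eq_lintegral_of_nonneg_ae (ae_of_all _ fun ω => Nat.cast_nonneg _)
    hmr.aestronglyMeasurable]
  simp only [ENNReal.ofReal_natCast]
  rw [pois_mean_lint P hl hp hf, ENNReal.toReal_ofReal hl]

lemma pois_memL2 (hf : Measurable f) :
    MemLp (fun ω => (f ω : ℝ)) 2 P := by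
  have hmr : Measurable (fun ω => ((f ω : ℕ) : ℝ)) := measurable_from_top.comp hf
  refine (memLp_two_iff_integrable_sq
    hmr.aestronglyMeasurable).2 ?_
  refine ⟨(hmr.pow_const 2).aestronglyMeasurable, ?_⟩
  rw [hasFiniteIntegral_iff_ofReal (ae_of_all _ fun ω => by positivity)]
  have : ∀ ω, ENNReal.ofReal ((f ω : ℝ) ^ 2) = ((f ω : ℕ) : ℝ≥0∞) ^ 2 := by
    intro ω
    rw [ENNReal.ofReal_pow (Nat.cast_nonneg _), ENNReal.ofReal_natCast]
  simp only [this]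
  rw [pois_sq_lint P hl hp hf]
  exact ENNReal.ofReal_lt_top

lemma pois_sq_integral (hf : Measurable f) :
    ∫ ω, (f ω : ℝ) ^ 2 ∂P = l + l ^ 2 := by
  have hmr : Measurable (fun ω => ((f ω : ℕ) : ℝ)) := measurable_from_top.comp hf
  rw [integral_eq_lintegral_of_nonneg_ae (ae_of_all _ fun ω => by positivity)
    (hmr.pow_const 2).aestronglyMeasurable]
  have : ∀ ω, ENNReal.ofReal ((f ω : ℝ) ^ 2) = ((f ω : ℕ) : ℝ≥0∞) ^ 2 := by
    intro ω
    rw [ENNReal.ofReal_pow (Nat.cast_nonneg _), ENNReal.ofReal_natCast]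
  simp only [this]
  rw [pois_sq_lint P hl hp hf, ENNReal.toReal_ofReal (by positivity)]

lemma pois_variance (hf : Measurable f) :
    variance (fun ω => (f ω : ℝ)) P = l := by
  rw [variance_eq_sub (pois_memL2 P hl hp hf)]
  have h2 : (fun ω => (f ω : ℝ)) ^ 2 = fun ω => (f ω : ℝ) ^ 2 := by
    funext ω; simp [Pi.pow_apply]
  rw [h2, pois_sq_integral P hl hp hf, pois_integral P hl hp hf]
  ring

end Pois

lemma ennreal_tsum_split (f : ℕ → ℝ≥0∞) (M : ℕ) :
    ∑' m, f m = ∑ m ∈ Finset.range M, f m + ∑' m, f (m + M) := by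
  have h : ∀ m, f m = (if m < M then f m else 0) + (if m < M then 0 else f m) := by
    intro m; split <;> simp
  rw [tsum_congr h, ENNReal.tsum_add]
  congr 1
  · rw [tsum_eq_sum (s := Finset.range M) (fun b hb => if_neg (by simpa using hb))]
    exact Finset.sum_congr rfl fun m hm => if_pos (Finset.mem_range.1 hm)
  · rw [← Function.Injective.tsum_eq (g := fun m : ℕ => m + M) (add_left_injective M)
      (f := fun m => if m < M then 0 else f m) ?_]
    · exact tsum_congr fun m => by rw [if_neg (by omega)]
    · intro x hx
      rw [Function.mem_support] at hx
      by_cases h' : x < M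
      · rw [if_pos h'] at hx
        exact absurd rfl hx
      · exact ⟨x - M, by simp only []; omega⟩

lemma desc_tendsto (r : ℕ) :
    Tendsto (fun n : ℕ => (Nat.descFactorial n r : ℝ) / (n : ℝ) ^ r) atTop (𝓝 1) := by
  have h1 : Tendsto (fun n : ℕ => ∏ i ∈ Finset.range r, (1 - (i : ℝ) / n)) atTop (𝓝 1) := by
    have := tendsto_finset_prod (f := fun (i : ℕ) (n : ℕ) => 1 - (i : ℝ) / n)
      (x := atTop) (a := fun _ => (1 : ℝ)) (Finset.range r)
      (fun i _ => by
        simpa using tendsto_const_nhds.sub (tendsto_const_div_atTop_nhds_zero_nat (i : ℝ)))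
    simpa using this
  refine h1.congr' ?_
  filter_upwards [eventually_ge_atTop (max r 1)] with n hn
  have hnr : r ≤ n := le_trans (le_max_left _ _) hn
  have hn1 : (1 : ℕ) ≤ n := le_trans (le_max_right _ _) hn
  have hn0 : (n : ℝ) ≠ 0 := Nat.cast_ne_zero.2 (by omega)
  rw [Nat.descFactorial_eq_prod_range, Nat.cast_prod]
  have hcast : ∀ i ∈ Finset.range r, ((n - i : ℕ) : ℝ) = (n : ℝ) - i := fun i hi =>
    Nat.cast_sub (le_trans (Nat.le_of_lt (Finset.mem_range.1 hi)) hnr)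
  rw [Finset.prod_congr rfl hcast]
  rw [show ((n : ℝ)) ^ r = ∏ _i ∈ Finset.range r, (n : ℝ) by
    rw [Finset.prod_const, Finset.card_range]]
  rw [← Finset.prod_div_distrib]
  exact (Finset.prod_congr rfl fun i _ => by field_simp).symm

lemma ennd_ofReal_le (a b : ℝ) :
    (ENNReal.ofReal a - ENNReal.ofReal b) ⊔ (ENNReal.ofReal b - ENNReal.ofReal a)
      ≤ ENNReal.ofReal |a - b| := by
  have key : ∀ x y : ℝ, ENNReal.ofReal x - ENNReal.ofReal y ≤ ENNReal.ofReal (x - y) := by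
    intro x y
    rcases le_or_gt y 0 with hy | hy
    · rw [ENNReal.ofReal_eq_zero.2 hy]
      exact le_trans (tsub_le_self) (ENNReal.ofReal_le_ofReal (by linarith))
    · rw [ENNReal.ofReal_sub x hy.le]
  refine sup_le (le_trans (key a b) (ENNReal.ofReal_le_ofReal (le_abs_self _)))
    (le_trans (key b a) (ENNReal.ofReal_le_ofReal ?_))
  rw [abs_sub_comm]
  exact le_abs_self _
  
lemma ennd_triangle (x y z : ℝ≥0∞) :
    (x - z) ⊔ (z - x) ≤ ((x - y) ⊔ (y - x)) + ((y - z) ⊔ (z - y)) := by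
  refine sup_le (le_trans (tsub_le_tsub_add_tsub (b := y)) (add_le_add le_sup_left le_sup_left))
    (le_trans (tsub_le_tsub_add_tsub (b := y)) ?_)
  rw [add_comm]
  exact add_le_add le_sup_right le_sup_right

noncomputable def lamAux (c : ℕ → ℝ) (n m : ℕ) : ℝ :=
  ((Nat.descFactorial n (m + 2) : ℝ) * c m) / (((m : ℝ) + 2) * (n : ℝ) ^ (m + 1))

lemma lamAux_nonneg {c : ℕ → ℝ} (hc0 : ∀ m, 0 ≤ c m) (n m : ℕ) : 0 ≤ lamAux c n m :=
  div_nonneg (mul_nonneg (Nat.cast_nonneg _) (hc0 m)) (by positivity)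

lemma lamAux_mul_le {c : ℕ → ℝ} (hc0 : ∀ m, 0 ≤ c m) {n : ℕ} (m : ℕ) (hn : 1 ≤ n) :
    ((m : ℝ) + 2) * lamAux c n m ≤ (n : ℝ) * c m := by
  have hn0 : (0 : ℝ) < (n : ℝ) := by exact_mod_cast hn
  have hpow : (0 : ℝ) < (n : ℝ) ^ (m + 1) := pow_pos hn0 _
  have hm2 : (0 : ℝ) < (m : ℝ) + 2 := by positivity
  rw [lamAux, mul_div_assoc', mul_div_mul_left _ _ (ne_of_gt hm2), div_le_iff₀ hpow]
  have hdesc : (Nat.descFactorial n (m + 2) : ℝ) ≤ (n : ℝ) ^ (m + 2) := by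
    exact_mod_cast Nat.descFactorial_le_pow n (m + 2)
  calc (Nat.descFactorial n (m + 2) : ℝ) * c m ≤ (n : ℝ) ^ (m + 2) * c m :=
        mul_le_mul_of_nonneg_right hdesc (hc0 m)
    _ = (n : ℝ) * c m * (n : ℝ) ^ (m + 1) := by rw [pow_succ]; ring

lemma lamAux_term {c : ℕ → ℝ} {n : ℕ} (m : ℕ) (hn : 1 ≤ n) :
    (n : ℝ)⁻¹ * (((m : ℝ) + 2) * lamAux c n m)
      = (Nat.descFactorial n (m + 2) : ℝ) / (n : ℝ) ^ (m + 2) * c m := by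
  have hn0 : (n : ℝ) ≠ 0 := by positivity
  have hm2 : ((m : ℝ) + 2) ≠ 0 := by positivity
  rw [lamAux]
  field_simp
  ring

lemma ofReal_m2 (m : ℕ) : ENNReal.ofReal ((m : ℝ) + 2) = (m : ℝ≥0∞) + 2 := by
  rw [ENNReal.ofReal_add (Nat.cast_nonneg m) (by norm_num), ENNReal.ofReal_natCast]
  norm_num

lemma ennd_split {x y t z : ℝ≥0∞} (h : x = y + t) :
    (x - z) ⊔ (z - x) ≤ ((y - z) ⊔ (z - y)) + t := by
  subst h
  refine sup_le ?_ ?_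
  · refine le_trans ?_ (add_le_add_left (le_sup_left : y - z ≤ _) t)
    rw [tsub_le_iff_right]
    calc y + t ≤ ((y - z) + z) + t := add_le_add_left le_tsub_add t
      _ = (y - z) + t + z := by ring
  · exact le_trans (tsub_le_tsub_left (self_le_add_right y t) z)
      (le_trans le_sup_right le_self_add)

/-- the probabilistic content of Lemma 5.6, `badv`, of the paper.
Let `(c_r)_{r≥2}` be nonnegative with `c = ∑_{r≥2} c_r < ∞`, and for each `n` let
`(X_{n,r})_{r≥2}` be independent Poisson variables with means
`m_{n,r} = n(n−1)⋯(n−r+1)·c_r/(r·n^{r−1})`. Then `(1/n) ∑_{r≥2} r·X_{n,r} → c`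
in probability. Here `c m` plays the role of `c_{m+2}` and `X n m` of `X_{n,m+2}`. -/
theorem stmt14 {Ω : Type*} [MeasurableSpace Ω] (P : Measure Ω) [IsProbabilityMeasure P]
    (c : ℕ → ℝ) (hc0 : ∀ m, 0 ≤ c m) (hcsum : Summable c)
    (X : ℕ → ℕ → Ω → ℕ)
    (hXmeas : ∀ n m, Measurable (X n m))
    (hindep : ∀ n, iIndepFun (X n) P)
    (hpois : ∀ n m k, P {ω | X n m ω = k} =
      ENNReal.ofReal (Real.exp (-(((n.descFactorial (m + 2) : ℝ) * c m) /
          (((m : ℝ) + 2) * (n : ℝ) ^ (m + 1)))) *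
        (((n.descFactorial (m + 2) : ℝ) * c m) /
          (((m : ℝ) + 2) * (n : ℝ) ^ (m + 1))) ^ k / (Nat.factorial k))) :
    ∀ ε : ℝ, 0 < ε →
      Tendsto (fun n : ℕ =>
        P {ω | ENNReal.ofReal ε ≤
          (atomVertexSum (X n) ω / (n : ℝ≥0∞) - ENNReal.ofReal (∑' m, c m)) ⊔
          (ENNReal.ofReal (∑' m, c m) - atomVertexSum (X n) ω / (n : ℝ≥0∞))})
        atTop (nhds 0) := by
  intro ε hε
  have hp' : ∀ n m k, P {ω | X n m ω = k}
      = ENNReal.ofReal (Real.exp (-(lamAux c n m)) * (lamAux c n m) ^ k / (Nat.factorial k)) :=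
    fun n m k => hpois n m k
  have hl0 : ∀ n m, 0 ≤ lamAux c n m := fun n m => lamAux_nonneg hc0 n m
  set Cr : ℝ := ∑' m, c m with hCrdef
  have hCr0 : 0 ≤ Cr := tsum_nonneg hc0
  rw [ENNReal.tendsto_nhds_zero]
  intro δ hδ
  set δ' : ℝ≥0∞ := min δ 1 with hδ'def
  have hδ'pos : 0 < δ' := lt_min hδ zero_lt_one
  have hδ'top : δ' ≠ ⊤ := ne_top_of_le_ne_top one_ne_top (min_le_right δ 1)
  set δr : ℝ := δ'.toReal with hδrdef
  have hδrpos : 0 < δr := ENNReal.toReal_pos hδ'pos.ne' hδ'top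
  -- choose the truncation level M
  obtain ⟨M, hMtail⟩ : ∃ M : ℕ, ∑' m, c (m + M) < min (ε / 8) (δr * ε / 8) :=
    ((tendsto_sum_nat_add c).eventually_lt_const
      (show (0 : ℝ) < min (ε / 8) (δr * ε / 8) by positivity)).exists
  set tailM : ℝ := ∑' m, c (m + M) with htailMdef
  have htail0 : 0 ≤ tailM := tsum_nonneg fun m => hc0 _
  set cH : ℝ := ∑ m ∈ Finset.range M, c m with hcHdef
  have hcH_le : cH ≤ Cr := Summable.sum_le_tsum (Finset.range M) (fun m _ => hc0 m) hcsum
  have hcH_tail : Cr - cH = tailM := by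
    have := Summable.sum_add_tsum_nat_add (f := c) M hcsum
    rw [← hCrdef] at this
    rw [← this]; ring
  -- the truncated (real-valued) normalized sum and its mean
  set Zf : ℕ → Ω → ℝ :=
    fun n ω => (n : ℝ)⁻¹ * ∑ m ∈ Finset.range M, (((m : ℝ) + 2) * (X n m ω : ℝ)) with hZfdef
  set EZ : ℕ → ℝ :=
    fun n => (n : ℝ)⁻¹ * ∑ m ∈ Finset.range M, (((m : ℝ) + 2) * lamAux c n m) with hEZdef
  have hZint : ∀ n, ∫ ω, Zf n ω ∂P = EZ n := by
    intro n
    simp only [hZfdef, hEZdef]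
    rw [integral_const_mul]
    congr 1
    rw [integral_finset_sum _
      (fun m _ => (pois_integrable P (hl0 n m) (hp' n m) (hXmeas n m)).const_mul _)]
    exact Finset.sum_congr rfl fun m _ => by
      rw [integral_const_mul, pois_integral P (hl0 n m) (hp' n m) (hXmeas n m)]
  have hmemZ : ∀ n, MemLp (Zf n) 2 P := by
    intro n
    simp only [hZfdef]
    have hfeq : (fun ω => ∑ m ∈ Finset.range M, (((m : ℝ) + 2) * (X n m ω : ℝ)))
        = ∑ m ∈ Finset.range M, (fun ω => ((m : ℝ) + 2) * (X n m ω : ℝ)) := by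
      funext ω; rw [Finset.sum_apply]
    have hsum : MemLp (fun ω => ∑ m ∈ Finset.range M, (((m : ℝ) + 2) * (X n m ω : ℝ))) 2 P := by
      rw [hfeq]
      exact memLp_finset_sum' _
        (fun m _ => (pois_memL2 P (hl0 n m) (hp' n m) (hXmeas n m)).const_mul _)
    exact hsum.const_mul _
  have hvarZ : ∀ n, variance (Zf n) P
      = ((n : ℝ)⁻¹) ^ 2 * ∑ m ∈ Finset.range M, ((m : ℝ) + 2) ^ 2 * lamAux c n m := by
    intro n
    simp only [hZfdef]
    rw [variance_const_mul]
    congr 1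
    have hfeq : (fun ω => ∑ m ∈ Finset.range M, (((m : ℝ) + 2) * (X n m ω : ℝ)))
        = ∑ m ∈ Finset.range M, (fun ω => ((m : ℝ) + 2) * (X n m ω : ℝ)) := by
      funext ω; rw [Finset.sum_apply]
    rw [hfeq, IndepFun.variance_sum
      (fun m _ => (pois_memL2 P (hl0 n m) (hp' n m) (hXmeas n m)).const_mul _)
      (fun i _ j _ hij =>
        ((hindep n).indepFun hij).comp
          (measurable_from_top : Measurable fun k : ℕ => ((i : ℝ) + 2) * (k : ℝ))
          (measurable_from_top : Measurable fun k : ℕ => ((j : ℝ) + 2) * (k : ℝ)))]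
    exact Finset.sum_congr rfl fun m _ => by
      rw [variance_const_mul, pois_variance P (hl0 n m) (hp' n m) (hXmeas n m)]
  -- the mean tends to cH
  have hEZt : Tendsto EZ atTop (𝓝 cH) := by
    have h1 : Tendsto (fun n : ℕ => ∑ m ∈ Finset.range M,
        (Nat.descFactorial n (m + 2) : ℝ) / (n : ℝ) ^ (m + 2) * c m) atTop
        (𝓝 (∑ m ∈ Finset.range M, 1 * c m)) :=
      tendsto_finset_sum _ (fun m _ => (desc_tendsto (m + 2)).mul_const (c m))
    have h2 : (∑ m ∈ Finset.range M, 1 * c m) = cH := by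
      rw [hcHdef]; exact Finset.sum_congr rfl fun m _ => one_mul _
    rw [h2] at h1
    refine Tendsto.congr' ?_ h1
    filter_upwards [eventually_ge_atTop 1] with n hn
    simp only [hEZdef]
    rw [Finset.mul_sum]
    exact (Finset.sum_congr rfl fun m _ => (lamAux_term m hn)).symm
  have ev2 : ∀ᶠ n in atTop, |EZ n - cH| < ε / 8 := by
    have habs : Tendsto (fun n => |EZ n - cH|) atTop (𝓝 |cH - cH|) :=
      (hEZt.sub_const cH).abs
    exact habs.eventually_lt_const (by simp; positivity)
  have ev3 : ∀ᶠ n : ℕ in atTop, (((M : ℝ) + 2) * Cr / (ε / 4) ^ 2) / n < δr / 2 :=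
    (tendsto_const_div_atTop_nhds_zero_nat _).eventually_lt_const (by positivity)
  filter_upwards [eventually_ge_atTop 1, ev2, ev3] with n hn1 hn2 hn3
  have hn0R : (0 : ℝ) < (n : ℝ) := by exact_mod_cast hn1
  have hnE0 : (n : ℝ≥0∞) ≠ 0 := by
    simp only [ne_eq, Nat.cast_eq_zero]; omega
  have hnET : (n : ℝ≥0∞) ≠ ⊤ := ENNReal.natCast_ne_top n
  -- tail part
  set Tf : Ω → ℝ≥0∞ :=
    fun ω => (∑' m, (((m + M : ℕ) : ℝ≥0∞) + 2) * (X n (m + M) ω : ℝ≥0∞)) / (n : ℝ≥0∞)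
    with hTfdef
  have hxm : ∀ m : ℕ, Measurable fun ω => ((X n (m + M) ω : ℕ) : ℝ≥0∞) :=
    fun m => measurable_from_top.comp (hXmeas n (m + M))
  have hTrawMeas : Measurable
      (fun ω => ∑' m, (((m + M : ℕ) : ℝ≥0∞) + 2) * (X n (m + M) ω : ℝ≥0∞)) :=
    Measurable.ennreal_tsum fun m => (hxm m).const_mul _
  have hTfMeas : Measurable Tf := by
    simp only [hTfdef]
    exact hTrawMeas.div_const _
  set E1 : Set Ω := {ω | ENNReal.ofReal (ε / 4) ≤ Tf ω} with hE1def
  set E2 : Set Ω := {ω | ε / 4 ≤ |Zf n ω - ∫ ω', Zf n ω' ∂P|} with hE2def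
  -- Markov bound for the tail
  have hE1bound : P E1 ≤ ENNReal.ofReal (δr / 2) := by
    have hlint : ∫⁻ ω, Tf ω ∂P ≤ ENNReal.ofReal tailM := by
      have step1 : ∫⁻ ω, Tf ω ∂P
          = (∑' m, (((m + M : ℕ) : ℝ≥0∞) + 2) * ENNReal.ofReal (lamAux c n (m + M)))
            * (n : ℝ≥0∞)⁻¹ := by
        simp only [hTfdef, div_eq_mul_inv]
        rw [lintegral_mul_const _ hTrawMeas]
        congr 1
        rw [lintegral_tsum
          (f := fun (m : ℕ) ω => (((m + M : ℕ) : ℝ≥0∞) + 2) * ((X n (m + M) ω : ℕ) : ℝ≥0∞))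
          (fun m => ((hxm m).const_mul _).aemeasurable)]
        exact tsum_congr fun m => by
          rw [lintegral_const_mul _ (hxm m),
            pois_mean_lint P (hl0 n (m + M)) (hp' n (m + M)) (hXmeas n (m + M))]
      rw [step1]
      have step2 : (∑' m, (((m + M : ℕ) : ℝ≥0∞) + 2) * ENNReal.ofReal (lamAux c n (m + M)))
          ≤ ENNReal.ofReal ((n : ℝ) * tailM) := by
        have hterm : ∀ m, (((m + M : ℕ) : ℝ≥0∞) + 2) * ENNReal.ofReal (lamAux c n (m + M))
            ≤ ENNReal.ofReal ((n : ℝ) * c (m + M)) := by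
          intro m
          rw [← ofReal_m2 (m + M), ← ENNReal.ofReal_mul (by positivity)]
          exact ENNReal.ofReal_le_ofReal (lamAux_mul_le hc0 (m + M) hn1)
        refine le_trans (ENNReal.tsum_le_tsum hterm) ?_
        rw [← ENNReal.ofReal_tsum_of_nonneg
          (fun m => mul_nonneg hn0R.le (hc0 _))
          (((summable_nat_add_iff M).2 hcsum).mul_left _)]
        exact le_of_eq (by rw [tsum_mul_left])
      calc (∑' m, (((m + M : ℕ) : ℝ≥0∞) + 2) * ENNReal.ofReal (lamAux c n (m + M)))
            * (n : ℝ≥0∞)⁻¹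
          ≤ ENNReal.ofReal ((n : ℝ) * tailM) * (n : ℝ≥0∞)⁻¹ := mul_le_mul_left step2 _
        _ = ENNReal.ofReal tailM := by
            rw [ENNReal.ofReal_mul hn0R.le, ENNReal.ofReal_natCast, mul_comm ((n : ℝ≥0∞)),
              mul_assoc, ENNReal.mul_inv_cancel hnE0 hnET, mul_one]
    calc P E1 ≤ (∫⁻ ω, Tf ω ∂P) / ENNReal.ofReal (ε / 4) :=
          meas_ge_le_lintegral_div hTfMeas.aemeasurable
            (ENNReal.ofReal_pos.2 (by positivity)).ne' ENNReal.ofReal_ne_top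
      _ ≤ ENNReal.ofReal tailM / ENNReal.ofReal (ε / 4) := ENNReal.div_le_div_right hlint _
      _ = ENNReal.ofReal (tailM / (ε / 4)) := (ENNReal.ofReal_div_of_pos (by positivity)).symm
      _ ≤ ENNReal.ofReal (δr / 2) := by
          refine ENNReal.ofReal_le_ofReal ?_
          rw [div_le_iff₀ (by positivity : (0:ℝ) < ε / 4)]
          have := lt_of_lt_of_le hMtail (min_le_right _ _)
          nlinarith
  -- Chebyshev bound for the truncated part
  have hE2bound : P E2 ≤ ENNReal.ofReal (δr / 2) := by
    refine le_trans (meas_ge_le_variance_div_sq (hmemZ n) (show (0:ℝ) < ε / 4 by positivity))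
      (ENNReal.ofReal_le_ofReal ?_)
    have hvle : variance (Zf n) P ≤ ((M : ℝ) + 2) * Cr / n := by
      rw [hvarZ n]
      have hsumle : ∑ m ∈ Finset.range M, ((m : ℝ) + 2) ^ 2 * lamAux c n m
          ≤ ∑ m ∈ Finset.range M, ((M : ℝ) + 2) * ((n : ℝ) * c m) := by
        refine Finset.sum_le_sum fun m hm => ?_
        have h1 := lamAux_mul_le hc0 m hn1
        have h2 : ((m : ℝ) + 2) ≤ (M : ℝ) + 2 := by
          have : (m : ℝ) ≤ (M : ℝ) := Nat.cast_le.2 (le_of_lt (Finset.mem_range.1 hm))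
          linarith
        calc ((m : ℝ) + 2) ^ 2 * lamAux c n m
            = ((m : ℝ) + 2) * (((m : ℝ) + 2) * lamAux c n m) := by ring
          _ ≤ ((M : ℝ) + 2) * ((n : ℝ) * c m) :=
              mul_le_mul h2 h1 (mul_nonneg (by positivity) (hl0 n m)) (by positivity)
      calc ((n : ℝ)⁻¹) ^ 2 * ∑ m ∈ Finset.range M, ((m : ℝ) + 2) ^ 2 * lamAux c n m
          ≤ ((n : ℝ)⁻¹) ^ 2 * (((M : ℝ) + 2) * ((n : ℝ) * cH)) := by
            refine mul_le_mul_of_nonneg_left (le_trans hsumle (le_of_eq ?_)) (by positivity)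
            simp only [hcHdef, Finset.mul_sum]
        _ ≤ ((M : ℝ) + 2) * Cr / n := by
            have heq : ((n : ℝ)⁻¹) ^ 2 * (((M : ℝ) + 2) * ((n : ℝ) * cH))
                = ((M : ℝ) + 2) * cH / n := by field_simp
            rw [heq]
            gcongr
    calc variance (Zf n) P / (ε / 4) ^ 2 ≤ (((M : ℝ) + 2) * Cr / n) / (ε / 4) ^ 2 := by gcongr
      _ = (((M : ℝ) + 2) * Cr / (ε / 4) ^ 2) / n := by ring
      _ ≤ δr / 2 := hn3.le
  -- inclusion of the event
  have hsub : {ω | ENNReal.ofReal ε ≤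
      (atomVertexSum (X n) ω / (n : ℝ≥0∞) - ENNReal.ofReal Cr) ⊔
      (ENNReal.ofReal Cr - atomVertexSum (X n) ω / (n : ℝ≥0∞))} ⊆ E1 ∪ E2 := by
    intro ω hω
    rw [Set.mem_setOf_eq] at hω
    rw [Set.mem_union]
    by_contra hno
    push_neg at hno
    obtain ⟨h1, h2⟩ := hno
    rw [hE1def, Set.mem_setOf_eq, not_le] at h1
    rw [hE2def, Set.mem_setOf_eq, not_le] at h2
    have hsplitω : atomVertexSum (X n) ω / (n : ℝ≥0∞)
        = ENNReal.ofReal (Zf n ω) + Tf ω := by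
      rw [atomVertexSum,
        ennreal_tsum_split (fun m => ((m : ℝ≥0∞) + 2) * (X n m ω : ℝ≥0∞)) M,
        ENNReal.add_div]
      congr 1
      have hsum : (∑ m ∈ Finset.range M, ((m : ℝ≥0∞) + 2) * (X n m ω : ℝ≥0∞))
          = ENNReal.ofReal (∑ m ∈ Finset.range M, (((m : ℝ) + 2) * (X n m ω : ℝ))) := by
        rw [ENNReal.ofReal_sum_of_nonneg (fun m _ => by positivity)]
        exact Finset.sum_congr rfl fun m _ => by
          rw [ENNReal.ofReal_mul (by positivity), ofReal_m2, ENNReal.ofReal_natCast]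
      rw [hsum]
      simp only [hZfdef]
      rw [inv_mul_eq_div, ENNReal.ofReal_div_of_pos hn0R, ENNReal.ofReal_natCast]
    have hchain : (atomVertexSum (X n) ω / (n : ℝ≥0∞) - ENNReal.ofReal Cr) ⊔
        (ENNReal.ofReal Cr - atomVertexSum (X n) ω / (n : ℝ≥0∞))
        ≤ (ENNReal.ofReal (ε / 4) + ENNReal.ofReal (ε / 4)) + ENNReal.ofReal (ε / 4) := by
      refine le_trans (ennd_split hsplitω) (add_le_add ?_ h1.le)
      refine le_trans (ennd_triangle _ (ENNReal.ofReal (∫ ω', Zf n ω' ∂P)) _) ?_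
      refine add_le_add ?_ ?_
      · exact le_trans (ennd_ofReal_le _ _) (ENNReal.ofReal_le_ofReal h2.le)
      · refine le_trans (ennd_ofReal_le _ _) (ENNReal.ofReal_le_ofReal ?_)
        rw [hZint n]
        have habs1 : |EZ n - cH| < ε / 8 := hn2
        have habs2 : |cH - Cr| ≤ ε / 8 := by
          rw [abs_sub_comm, abs_of_nonneg (by linarith)]
          have := lt_of_lt_of_le hMtail (min_le_left _ _)
          linarith [hcH_tail]
        calc |EZ n - Cr| ≤ |EZ n - cH| + |cH - Cr| := abs_sub_le _ _ _
          _ ≤ ε / 4 := by linarith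
    have hfinal : ENNReal.ofReal ε ≤ ENNReal.ofReal (ε / 4 + ε / 4 + ε / 4) := by
      refine le_trans hω (le_trans hchain (le_of_eq ?_))
      rw [ENNReal.ofReal_add (by positivity) (by positivity),
        ENNReal.ofReal_add (by positivity) (by positivity)]
    have : ε ≤ ε / 4 + ε / 4 + ε / 4 :=
      (ENNReal.ofReal_le_ofReal_iff (by positivity)).1 hfinal
    linarith
  calc P {ω | ENNReal.ofReal ε ≤
        (atomVertexSum (X n) ω / (n : ℝ≥0∞) - ENNReal.ofReal Cr) ⊔
        (ENNReal.ofReal Cr - atomVertexSum (X n) ω / (n : ℝ≥0∞))}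
      ≤ P (E1 ∪ E2) := measure_mono hsub
    _ ≤ P E1 + P E2 := measure_union_le _ _
    _ ≤ ENNReal.ofReal (δr / 2) + ENNReal.ofReal (δr / 2) := add_le_add hE1bound hE2bound
    _ = ENNReal.ofReal δr := by
        rw [← ENNReal.ofReal_add (by positivity) (by positivity)]
        norm_num
    _ = δ' := ENNReal.ofReal_toReal hδ'top
    _ ≤ δ := min_le_left _ _
end
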